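/- Let ζ = (1+√3·i)/2 ∈ ℂ and b ∈ ℂ. Let L_b be the additive subgroup of ℂ² generated by (1,0), (ζ,0), (0,1), (b,ζ), and let φ : ℂ² → ℂ² be the ℂ-linear map φ(z,w) = (ζ²·z, ζ⁻²·w). Then φ maps L_b into L_b if and only if b ∈ Λ, where Λ is the additive subgroup of ℂ generated by 1 and ζ. (Hence the order-3 group generated by diag(ζ²,ζ⁻²) acts on the torus ℂ²/L_b only when ℂ²/L_b ≅ E × E for E = ℂ/Λ.) -/

import Mathlib

private noncomputable def Mgrp (ζ b : ℂ) : AddSubgroup (ℂ × ℂ) where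
  carrier := {p | ∃ n m k l : ℤ, p = ((n : ℂ) + m * ζ + l * b, (k : ℂ) + l * ζ)}
  zero_mem' := ⟨0, 0, 0, 0, by simp [Prod.ext_iff]⟩
  add_mem' := by
    rintro p q ⟨n, m, k, l, rfl⟩ ⟨n', m', k', l', rfl⟩
    exact ⟨n + n', m + m', k + k', l + l', by
      simp [Prod.ext_iff]; push_cast; constructor <;> ring⟩
  neg_mem' := by
    rintro p ⟨n, m, k, l, rfl⟩
    exact ⟨-n, -m, -k, -l, by
      simp [Prod.ext_iff]; push_cast; constructor <;> ring⟩

private noncomputable def Ngrp (ζ : ℂ) : AddSubgroup ℂ where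
  carrier := {x | ∃ n m : ℤ, x = (n : ℂ) + m * ζ}
  zero_mem' := ⟨0, 0, by simp⟩
  add_mem' := by
    rintro x y ⟨n, m, rfl⟩ ⟨n', m', rfl⟩
    exact ⟨n + n', m + m', by push_cast; ring⟩
  neg_mem' := by
    rintro x ⟨n, m, rfl⟩
    exact ⟨-n, -m, by push_cast; ring⟩

theorem stmt6 (ζ : ℂ) (hζ : ζ = (1 + (Real.sqrt 3 : ℂ) * Complex.I) / 2) (b : ℂ)
    (φ : (ℂ × ℂ) →ₗ[ℂ] (ℂ × ℂ))
    (hφ : ∀ p : ℂ × ℂ, φ p = (ζ ^ 2 * p.1, ζ ^ (-2 : ℤ) * p.2)) :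
    (∀ x ∈ AddSubgroup.closure {((1 : ℂ), (0 : ℂ)), (ζ, 0), (0, 1), (b, ζ)},
        φ x ∈ AddSubgroup.closure {((1 : ℂ), (0 : ℂ)), (ζ, 0), (0, 1), (b, ζ)}) ↔
      b ∈ AddSubgroup.closure ({1, ζ} : Set ℂ) := by
  have hsq : ζ ^ 2 = ζ - 1 := by
    have h3 : ((Real.sqrt 3 : ℝ) : ℂ) ^ 2 = 3 := by
      norm_cast; rw [Real.sq_sqrt]; norm_num
    rw [hζ]
    linear_combination (((Real.sqrt 3 : ℝ) : ℂ) ^ 2 / 4) * Complex.I_sq - (1 / 4) * h3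
  have hinv : ζ ^ (-2 : ℤ) = -ζ := by
    have h1 : ζ ^ 2 * (-ζ) = 1 := by linear_combination (-(ζ + 1)) * hsq
    have h2 : ζ ^ (-2 : ℤ) = (ζ ^ 2)⁻¹ := by
      rw [zpow_neg]; norm_cast
    rw [h2, inv_eq_of_mul_eq_one_right h1]
  have him : ζ.im = Real.sqrt 3 / 2 := by rw [hζ]; simp
  have him_ne : ζ.im ≠ 0 := by
    rw [him]
    positivity
  set S : Set (ℂ × ℂ) := {((1 : ℂ), (0 : ℂ)), (ζ, 0), (0, 1), (b, ζ)} with hS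
  set L := AddSubgroup.closure S with hL
  constructor
  · -- forward
    intro h
    have h01 : ((0 : ℂ), (1 : ℂ)) ∈ L := AddSubgroup.subset_closure (by simp [hS])
    have hmem : φ (0, 1) ∈ L := h _ h01
    have hLM : L ≤ Mgrp ζ b := by
      rw [hL]
      apply AddSubgroup.closure_le (Mgrp ζ b) |>.mpr
      rintro p hp
      simp only [hS, Set.mem_insert_iff, Set.mem_singleton_iff] at hp
      rcases hp with rfl | rfl | rfl | rfl
      · exact ⟨1, 0, 0, 0, by simp⟩
      · exact ⟨0, 1, 0, 0, by simp⟩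
      · exact ⟨0, 0, 1, 0, by simp⟩
      · exact ⟨0, 0, 0, 1, by simp⟩
    have := hLM hmem
    rw [hφ] at this
    obtain ⟨n, m, k, l, hp⟩ := this
    simp only [hinv, Prod.ext_iff] at hp
    obtain ⟨h1, h2⟩ := hp
    -- h1 : ζ^2 * 0 = n + m ζ + l b ;  h2 : -ζ * 1 = k + l ζ
    have hl' : l = -1 := by
      have hIm : -ζ.im = (l : ℝ) * ζ.im := by
        have := congrArg Complex.im h2
        simpa using this
      have h0 : ((l : ℝ) + 1) * ζ.im = 0 := by linarith
      rcases mul_eq_zero.mp h0 with hh | hh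
      · exact_mod_cast eq_neg_of_add_eq_zero_left hh
      · exact absurd hh him_ne
    subst hl'
    have hb : b = (n : ℂ) + m * ζ := by
      push_cast at h1
      linear_combination h1
    rw [hb]
    refine AddSubgroup.add_mem _ ?_ ?_
    · have : ((n : ℂ)) = n • (1 : ℂ) := by simp
      rw [this]
      exact AddSubgroup.zsmul_mem _ (AddSubgroup.subset_closure (by simp)) n
    · have : (m : ℂ) * ζ = m • ζ := by simp
      rw [this]
      exact AddSubgroup.zsmul_mem _ (AddSubgroup.subset_closure (by simp)) m
  · -- backward
    intro hb
    have hbN : b ∈ Ngrp ζ := by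
      refine AddSubgroup.closure_le (Ngrp ζ) |>.mpr ?_ hb
      rintro x hx
      simp only [Set.mem_insert_iff, Set.mem_singleton_iff] at hx
      rcases hx with rfl | rfl
      · exact ⟨1, 0, by simp⟩
      · exact ⟨0, 1, by simp⟩
    obtain ⟨n, m, hbnm⟩ := hbN
    intro x hx
    have e1 : ((1 : ℂ), (0 : ℂ)) ∈ L := AddSubgroup.subset_closure (by simp [hS])
    have e2 : ((ζ : ℂ), (0 : ℂ)) ∈ L := AddSubgroup.subset_closure (by simp [hS])
    have e3 : ((0 : ℂ), (1 : ℂ)) ∈ L := AddSubgroup.subset_closure (by simp [hS])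
    have e4 : ((b : ℂ), (ζ : ℂ)) ∈ L := AddSubgroup.subset_closure (by simp [hS])
    have hb0 : ((b : ℂ), (0 : ℂ)) ∈ L := by
      have : ((b : ℂ), (0 : ℂ)) = n • ((1 : ℂ), (0 : ℂ)) + m • ((ζ : ℂ), (0 : ℂ)) := by
        simp [Prod.ext_iff, hbnm]
      rw [this]
      exact AddSubgroup.add_mem _ (AddSubgroup.zsmul_mem _ e1 n) (AddSubgroup.zsmul_mem _ e2 m)
    have hzb0 : ((ζ * b : ℂ), (0 : ℂ)) ∈ L := by
      have : ((ζ * b : ℂ), (0 : ℂ)) = (-m) • ((1 : ℂ), (0 : ℂ)) + (n + m) • ((ζ : ℂ), (0 : ℂ)) := by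
        simp [Prod.ext_iff, hbnm]
        push_cast
        linear_combination (m : ℂ) * hsq
      rw [this]
      exact AddSubgroup.add_mem _ (AddSubgroup.zsmul_mem _ e1 (-m)) (AddSubgroup.zsmul_mem _ e2 (n + m))
    induction hx using AddSubgroup.closure_induction with
    | mem p hp =>
      simp only [hS, Set.mem_insert_iff, Set.mem_singleton_iff] at hp
      rcases hp with rfl | rfl | rfl | rfl
      · rw [hφ]
        have : ((ζ ^ 2 * 1 : ℂ), (ζ ^ (-2:ℤ) * 0 : ℂ)) = ((ζ : ℂ), (0:ℂ)) + (-((1:ℂ), (0:ℂ))) := by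
          rw [hinv]
          simp only [Prod.neg_mk, Prod.mk_add_mk, Prod.mk.injEq]
          constructor
          · linear_combination hsq
          · ring
        rw [this]
        exact AddSubgroup.add_mem _ e2 (AddSubgroup.neg_mem _ e1)
      · rw [hφ]
        have : ((ζ ^ 2 * ζ : ℂ), (ζ ^ (-2:ℤ) * 0 : ℂ)) = -((1:ℂ), (0:ℂ)) := by
          rw [hinv]
          simp only [Prod.neg_mk, Prod.mk.injEq]
          constructor
          · linear_combination (ζ + 1) * hsq
          · ring
        rw [this]
        exact AddSubgroup.neg_mem _ e1
      · rw [hφ]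
        have : ((ζ ^ 2 * 0 : ℂ), (ζ ^ (-2:ℤ) * 1 : ℂ)) = ((b:ℂ), (0:ℂ)) + (-((b:ℂ), (ζ:ℂ))) := by
          rw [hinv]
          simp only [Prod.neg_mk, Prod.mk_add_mk, Prod.mk.injEq]
          constructor <;> ring
        rw [this]
        exact AddSubgroup.add_mem _ hb0 (AddSubgroup.neg_mem _ e4)
      · rw [hφ]
        have : ((ζ ^ 2 * b : ℂ), (ζ ^ (-2:ℤ) * ζ : ℂ)) =
            ((0:ℂ), (1:ℂ)) + (-((b:ℂ), (ζ:ℂ))) + ((ζ * b : ℂ), (0:ℂ)) := by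
          rw [hinv]
          simp only [Prod.neg_mk, Prod.mk_add_mk, Prod.mk.injEq]
          constructor
          · linear_combination b * hsq
          · linear_combination -hsq
        rw [this]
        exact AddSubgroup.add_mem _ (AddSubgroup.add_mem _ e3 (AddSubgroup.neg_mem _ e4)) hzb0
    | zero => simpa using (AddSubgroup.zero_mem L)
    | add p q _ _ hp hq => rw [map_add]; exact AddSubgroup.add_mem _ hp hq
    | neg p _ hp => rw [map_neg]; exact AddSubgroup.neg_mem _ hp
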